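/- Let n be a positive integer and let f be a C² complex-valued function on 𝒰_n = ℝ₊ × ℋ_n that is holomorphic, i.e. ∂f/∂w̄ := (1/2)(∂f/∂s + i ∂f/∂t) = 0 and Z̄_j f := ∂f/∂z̄_j − i z_j ∂f/∂s = 0 for j = 1,…,n. Then for every p > 0 and every (t,g) ∈ 𝒰_n with f(t,g) ≠ 0, one has ℒ|f|^p(t,g) ≥ 0, where ℒ = (1/(4n)) ∑_{j=1}^{2n} X_j² − ∂/∂t is the heat operator. -/

import Mathlib

open Filter Topology


noncomputable section

/-- A point of the Heisenberg group ℋ_n : `(s, z) ∈ ℝ × ℂⁿ`. -/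
abbrev Heis (n : ℕ) := ℝ × (Fin n → ℂ)

/-- The left-invariant vector field `X_j = ∂/∂x_j + 2 x_{n+j} ∂/∂s` (real-valued). -/
def XR {n : ℕ} (j : Fin n) (v : Heis n → ℝ) (g : Heis n) : ℝ :=
  fderiv ℝ v g (2 * (g.2 j).im, Pi.single j 1)

/-- The left-invariant vector field `X_{n+j} = ∂/∂x_{n+j} − 2 x_j ∂/∂s` (real-valued). -/
def YR {n : ℕ} (j : Fin n) (v : Heis n → ℝ) (g : Heis n) : ℝ :=
  fderiv ℝ v g (-2 * (g.2 j).re, Pi.single j Complex.I)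

/-- The heat operator `ℒ = (1/(4n)) ∑_{j=1}^{2n} X_j² − ∂/∂t` on `ℝ₊ × ℋ_n`,
acting on real-valued functions. -/
def heatOpR (n : ℕ) (v : ℝ × Heis n → ℝ) (p : ℝ × Heis n) : ℝ :=
  (1 / (4 * (n : ℝ))) *
      ∑ j : Fin n, (XR j (XR j (fun g => v (p.1, g))) p.2 + YR j (YR j (fun g => v (p.1, g))) p.2)
    - fderiv ℝ v p (1, 0)

/-- Holomorphy on the one-factor flat model `𝒰_n = ℝ₊ × ℋ_n`:
`∂f/∂w̄ = (1/2)(∂f/∂s + i ∂f/∂t) = 0` and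
`Z̄_j f = ∂f/∂z̄_j − i z_j ∂f/∂s = 0`. -/
def IsFlatHolomorphicAt₁ (n : ℕ) (f : ℝ × Heis n → ℂ) (p : ℝ × Heis n) : Prop :=
  (1/2 : ℂ) * (fderiv ℝ f p (0, (1, 0)) + Complex.I * fderiv ℝ f p (1, 0)) = 0 ∧
  ∀ j : Fin n,
    (1/2 : ℂ) * (fderiv ℝ f p (0, (0, Pi.single j 1))
        + Complex.I * fderiv ℝ f p (0, (0, Pi.single j Complex.I)))
      - Complex.I * p.2.2 j * fderiv ℝ f p (0, (1, 0)) = 0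

/-- auxiliary: the derivative of `Complex.normSq`, as a continuous linear map in the base point. -/
noncomputable def Tc : ℂ →L[ℝ] ℂ →L[ℝ] ℝ :=
  Complex.reCLM.smulRight ((2:ℝ) • Complex.reCLM) + Complex.imCLM.smulRight ((2:ℝ) • Complex.imCLM)

lemma Tc_apply (z h : ℂ) : Tc z h = 2*(z.re*h.re) + 2*(z.im*h.im) := by
  simp [Tc]; ring

lemma hasFDerivAt_normSq' (w : ℂ) : HasFDerivAt Complex.normSq (Tc w) w := by
  have h1 : HasFDerivAt (fun z : ℂ => z.re*z.re + z.im*z.im) (Tc w) w := by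
    have hre : HasFDerivAt (fun z : ℂ => z.re) Complex.reCLM w := Complex.reCLM.hasFDerivAt
    have him : HasFDerivAt (fun z : ℂ => z.im) Complex.imCLM w := Complex.imCLM.hasFDerivAt
    have h2 : HasFDerivAt (fun z : ℂ => z.re*z.re + z.im*z.im) _ w := (hre.mul hre).add (him.mul him)
    refine h2.congr_fderiv ?_
    ext h
    simp [Tc]
    ring
  have h0 : Complex.normSq = fun z : ℂ => z.re*z.re+z.im*z.im :=
    funext fun z => Complex.normSq_apply z
  rw [h0]; exact h1

set_option maxHeartbeats 1000000 in
/-- Parabolic subharmonicity: if `f` is C² and holomorphic on `𝒰_n = ℝ₊ × ℋ_n`,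
then `ℒ |f|^p ≥ 0` at every point where `f ≠ 0`, for every `p > 0`. -/
theorem heatOp_abs_rpow_nonneg (n : ℕ) (hn : 0 < n)
    (f : ℝ × Heis n → ℂ)
    (hf : ContDiffOn ℝ 2 f {q : ℝ × Heis n | 0 < q.1})
    (hholo : ∀ q : ℝ × Heis n, 0 < q.1 → IsFlatHolomorphicAt₁ n f q)
    (p : ℝ) (hp : 0 < p) :
    ∀ q : ℝ × Heis n, 0 < q.1 → f q ≠ 0 →
      0 ≤ heatOpR n (fun x => ‖f x‖ ^ p) q := by
  intro q hq1 hfq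
  -- replace ‖·‖^p by (normSq ·)^(p/2)
  have hfun : (fun x : ℝ × Heis n => ‖f x‖ ^ p) = fun x => Complex.normSq (f x) ^ (p/2) := by
    funext x
    rw [Complex.normSq_eq_norm_sq, ← Real.rpow_natCast ‖f x‖ 2,
      ← Real.rpow_mul (norm_nonneg _)]
    rw [show ((2:ℕ):ℝ) * (p/2) = p by push_cast; ring]
  rw [hfun]
  -- the open sets
  set O : Set (ℝ × Heis n) := {x : ℝ × Heis n | 0 < x.1} with hO_def
  have hO : IsOpen O := isOpen_lt continuous_const continuous_fst
  have hqO : q ∈ O := hq1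
  have hfd : ∀ x ∈ O, HasFDerivAt f (fderiv ℝ f x) x := fun x hx =>
    ((hf.differentiableOn (by norm_num)).differentiableAt (hO.mem_nhds hx)).hasFDerivAt
  set U : Set (ℝ × Heis n) := O ∩ f ⁻¹' ({0}ᶜ) with hU_def
  have hU : IsOpen U := hf.continuousOn.isOpen_inter_preimage hO isOpen_compl_singleton
  have hqU : q ∈ U := ⟨hq1, hfq⟩
  have hNpos : ∀ x ∈ U, 0 < Complex.normSq (f x) := fun x hx => Complex.normSq_pos.2 hx.2
  have hNq : 0 < Complex.normSq (f q) := hNpos q hqU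
  -- first derivative data
  set DN : (ℝ × Heis n) → (ℝ × Heis n) →L[ℝ] ℝ :=
    fun x => (Tc (f x)).comp (fderiv ℝ f x) with hDN_def
  set Du : (ℝ × Heis n) → (ℝ × Heis n) →L[ℝ] ℝ :=
    fun x => ((p/2) * (Complex.normSq (f x)) ^ (p/2 - 1)) • DN x with hDu_def
  have hN : ∀ x ∈ U, HasFDerivAt (fun y => Complex.normSq (f y)) (DN x) x := fun x hx =>
    (hasFDerivAt_normSq' (f x)).comp x (hfd x hx.1)
  have hu : ∀ x ∈ U, HasFDerivAt (fun y => Complex.normSq (f y) ^ (p/2)) (Du x) x := by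
    intro x hx
    have h1 : HasDerivAt (fun r : ℝ => r ^ (p/2))
        ((p/2) * (Complex.normSq (f x)) ^ (p/2 - 1)) (Complex.normSq (f x)) :=
      Real.hasDerivAt_rpow_const (Or.inl (hNpos x hx).ne')
    exact h1.comp_hasFDerivAt x (hN x hx)
  -- second derivative data at q
  set A : (ℝ × Heis n) →L[ℝ] ℂ := fderiv ℝ f q with hA_def
  have hA : HasFDerivAt f A q := hfd q hqO
  set Q : (ℝ × Heis n) →L[ℝ] (ℝ × Heis n) →L[ℝ] ℂ := fderiv ℝ (fderiv ℝ f) q with hQ_def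
  have hQ : HasFDerivAt (fderiv ℝ f) Q q := by
    have h1 : ContDiffOn ℝ 1 (fderiv ℝ f) O := hf.fderiv_of_isOpen hO (by norm_num)
    exact ((h1.differentiableOn one_ne_zero).differentiableAt (hO.mem_nhds hqO)).hasFDerivAt
  have hsym : ∀ v w, Q v w = Q w v := by
    intro v w
    refine second_derivative_symmetric_of_eventually (f := f) ?_ hQ v w
    filter_upwards [hO.mem_nhds hqO] with y hy using hfd y hy
  have hDN' : HasFDerivAt DN
      ((ContinuousLinearMap.compL ℝ (ℝ × Heis n) ℂ ℝ (Tc (f q))).comp Q +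
        ((ContinuousLinearMap.compL ℝ (ℝ × Heis n) ℂ ℝ).flip (fderiv ℝ f q)).comp
          (Tc.comp A)) q := by
    have hc : HasFDerivAt (fun y => Tc (f y)) (Tc.comp A) q := Tc.hasFDerivAt.comp q hA
    exact hc.clm_comp hQ
  have hs' : HasFDerivAt (fun x => (p/2) * Complex.normSq (f x) ^ (p/2 - 1))
      ((p/2) • (((p/2-1) * (Complex.normSq (f q)) ^ (p/2-1-1)) • DN q)) q := by
    have h1 : HasDerivAt (fun r : ℝ => r ^ (p/2-1))
        ((p/2-1) * (Complex.normSq (f q)) ^ (p/2-1-1)) (Complex.normSq (f q)) :=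
      Real.hasDerivAt_rpow_const (Or.inl hNq.ne')
    exact (h1.comp_hasFDerivAt q (hN q hqU)).const_mul (p/2)
  obtain ⟨HH, hHH, hHHev⟩ : ∃ HH : (ℝ × Heis n) →L[ℝ] (ℝ × Heis n) →L[ℝ] ℝ,
      HasFDerivAt Du HH q ∧ ∀ v w,
        HH v w = (p/2 * Complex.normSq (f q) ^ (p/2-1)) *
            (Tc (A v) (A w) + Tc (f q) (Q v w)) +
          ((p/2) * ((p/2-1) * Complex.normSq (f q) ^ (p/2-1-1)) * (Tc (f q) (A v))) *
            (Tc (f q) (A w)) := by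
    refine ⟨_, hs'.smul hDN', ?_⟩
    intro v w
    simp [hDN_def, hA_def, smul_smul]
    ring
  -- plumbing: iterated horizontal derivatives equal second-derivative values
  have main : ∀ (dir : Heis n → Heis n) (M : Heis n →L[ℝ] (ℝ × Heis n)),
      (∀ g : Heis n, HasFDerivAt (fun g' : Heis n => (((0:ℝ), dir g') : ℝ × Heis n)) M g) →
      (M (dir q.2) = 0) →
      fderiv ℝ (fun g => fderiv ℝ (fun g' => Complex.normSq (f (q.1, g')) ^ (p/2)) g (dir g))
          q.2 (dir q.2)
        = HH ((0:ℝ), dir q.2) ((0:ℝ), dir q.2) := by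
    intro dir M hM hM0
    have hsnb : {g : Heis n | (q.1, g) ∈ U} ∈ 𝓝 q.2 := by
      have hcont : Continuous (fun g : Heis n => ((q.1, g) : ℝ × Heis n)) :=
        continuous_const.prodMk continuous_id
      exact hcont.continuousAt.preimage_mem_nhds (hU.mem_nhds hqU)
    have hGev : (fun g => fderiv ℝ (fun g' => Complex.normSq (f (q.1, g')) ^ (p/2)) g (dir g))
        =ᶠ[𝓝 q.2] (fun g => Du (q.1, g) (((0:ℝ), dir g) : ℝ × Heis n)) := by
      filter_upwards [hsnb] with g hg
      have h1 : HasFDerivAt (fun g' : Heis n => Complex.normSq (f (q.1, g')) ^ (p/2))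
          ((Du (q.1,g)).comp (ContinuousLinearMap.inr ℝ ℝ (Heis n))) g :=
        (hu _ hg).comp g (hasFDerivAt_prodMk_right q.1 g)
      rw [h1.fderiv]
      simp
    rw [hGev.fderiv_eq]
    have hc : HasFDerivAt (fun g : Heis n => Du (q.1, g))
        (HH.comp (ContinuousLinearMap.inr ℝ ℝ (Heis n))) q.2 :=
      (show HasFDerivAt Du HH (q.1, q.2) from hHH).comp q.2 (hasFDerivAt_prodMk_right q.1 q.2)
    have happ := hc.clm_apply (hM q.2)
    rw [happ.fderiv]
    simp [hM0]
  have hXX : ∀ j : Fin n,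
      XR j (XR j (fun g => Complex.normSq (f (q.1, g)) ^ (p/2))) q.2
        = HH ((0:ℝ), (2 * (q.2.2 j).im, Pi.single j 1))
            ((0:ℝ), (2 * (q.2.2 j).im, Pi.single j 1)) := by
    intro j
    set ℓ : Heis n →L[ℝ] ℝ := (2:ℝ) • (Complex.imCLM.comp ((ContinuousLinearMap.proj j).comp
        (ContinuousLinearMap.snd ℝ ℝ (Fin n → ℂ)))) with hl_def
    set M : Heis n →L[ℝ] (ℝ × Heis n) :=
      (0 : Heis n →L[ℝ] ℝ).prod (ℓ.prod (0 : Heis n →L[ℝ] (Fin n → ℂ))) with hM_def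
    have hM : ∀ g : Heis n, HasFDerivAt
        (fun g' : Heis n => (((0:ℝ), ((2 * ((g' : Heis n).2 j).im : ℝ), Pi.single j (1:ℂ))) :
          ℝ × Heis n)) M g := by
      intro g
      have hl0 : HasFDerivAt (fun g' : Heis n => (g'.2 j).im)
          (Complex.imCLM.comp ((ContinuousLinearMap.proj j).comp
            (ContinuousLinearMap.snd ℝ ℝ (Fin n → ℂ)))) g :=
        (Complex.imCLM.comp ((ContinuousLinearMap.proj j).comp
            (ContinuousLinearMap.snd ℝ ℝ (Fin n → ℂ)))).hasFDerivAt
      have hl : HasFDerivAt (fun g' : Heis n => 2 * (g'.2 j).im) ℓ g := hl0.const_mul (2:ℝ)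
      exact HasFDerivAt.prodMk (hasFDerivAt_const (0:ℝ) g) (hl.prodMk (hasFDerivAt_const _ g))
    have hM0 : M ((2 * (q.2.2 j).im, Pi.single j 1) : Heis n) = 0 := by
      simp [hM_def, hl_def, Prod.ext_iff]
    exact main (fun g : Heis n => ((2 * (g.2 j).im, Pi.single j 1) : Heis n)) M hM hM0
  have hYY : ∀ j : Fin n,
      YR j (YR j (fun g => Complex.normSq (f (q.1, g)) ^ (p/2))) q.2
        = HH ((0:ℝ), (-2 * (q.2.2 j).re, Pi.single j Complex.I))
            ((0:ℝ), (-2 * (q.2.2 j).re, Pi.single j Complex.I)) := by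
    intro j
    set ℓ : Heis n →L[ℝ] ℝ := (-2:ℝ) • (Complex.reCLM.comp ((ContinuousLinearMap.proj j).comp
        (ContinuousLinearMap.snd ℝ ℝ (Fin n → ℂ)))) with hl_def
    set M : Heis n →L[ℝ] (ℝ × Heis n) :=
      (0 : Heis n →L[ℝ] ℝ).prod (ℓ.prod (0 : Heis n →L[ℝ] (Fin n → ℂ))) with hM_def
    have hM : ∀ g : Heis n, HasFDerivAt
        (fun g' : Heis n => (((0:ℝ), ((-2 * ((g' : Heis n).2 j).re : ℝ), Pi.single j Complex.I)) :
          ℝ × Heis n)) M g := by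
      intro g
      have hl0 : HasFDerivAt (fun g' : Heis n => (g'.2 j).re)
          (Complex.reCLM.comp ((ContinuousLinearMap.proj j).comp
            (ContinuousLinearMap.snd ℝ ℝ (Fin n → ℂ)))) g :=
        (Complex.reCLM.comp ((ContinuousLinearMap.proj j).comp
            (ContinuousLinearMap.snd ℝ ℝ (Fin n → ℂ)))).hasFDerivAt
      have hl : HasFDerivAt (fun g' : Heis n => -2 * (g'.2 j).re) ℓ g := hl0.const_mul (-2:ℝ)
      exact HasFDerivAt.prodMk (hasFDerivAt_const (0:ℝ) g) (hl.prodMk (hasFDerivAt_const _ g))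
    have hM0 : M ((-2 * (q.2.2 j).re, Pi.single j Complex.I) : Heis n) = 0 := by
      simp [hM_def, hl_def, Prod.ext_iff]
    exact main (fun g : Heis n => ((-2 * (g.2 j).re, Pi.single j Complex.I) : Heis n)) M hM hM0
  -- pointwise holomorphy at q
  obtain ⟨hw0, hz0⟩ := hholo q hq1
  rw [← hA_def] at hw0
  have hz0' : ∀ j : Fin n, (1/2 : ℂ) * (A (0, (0, Pi.single j 1))
        + Complex.I * A (0, (0, Pi.single j Complex.I)))
      - Complex.I * q.2.2 j * A (0, (1, 0)) = 0 := by
    intro j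
    have := hz0 j
    rwa [← hA_def] at this
  -- differentiated holomorphy identities
  have evalQ : ∀ w : ℝ × Heis n, HasFDerivAt (fun x => fderiv ℝ f x w) (Q.flip w) q := by
    intro w
    have h := hQ.clm_apply (hasFDerivAt_const w q)
    simpa using h
  have hPhi : ∀ (j : Fin n) (v : ℝ × Heis n),
      (1/2:ℂ) * (Q v (0,(0,Pi.single j 1)) + Complex.I * Q v (0,(0,Pi.single j Complex.I)))
        - (Complex.I * q.2.2 j * Q v (0,(1,0)) + Complex.I * v.2.2 j * A (0,(1,0))) = 0 := by
    intro j v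
    set πj : (ℝ × Heis n) →L[ℝ] ℂ := (ContinuousLinearMap.proj j).comp
        ((ContinuousLinearMap.snd ℝ ℝ (Fin n → ℂ)).comp
          (ContinuousLinearMap.snd ℝ ℝ (Heis n))) with hπj_def
    have hπ : HasFDerivAt (fun x : ℝ × Heis n => x.2.2 j) πj q := πj.hasFDerivAt
    have hmulfd : HasFDerivAt
        (fun x : ℝ × Heis n => Complex.I * x.2.2 j * fderiv ℝ f x (0,(1,0)))
        ((Complex.I * q.2.2 j) • (Q.flip (0,(1,0)))
          + (fderiv ℝ f q (0,(1,0))) • (Complex.I • πj)) q :=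
      (hπ.const_mul Complex.I).mul (evalQ (0,(1,0)))
    have hPhifd : HasFDerivAt (fun x : ℝ × Heis n =>
        (1/2:ℂ) * (fderiv ℝ f x (0, (0, Pi.single j 1))
          + Complex.I * fderiv ℝ f x (0, (0, Pi.single j Complex.I)))
        - Complex.I * x.2.2 j * fderiv ℝ f x (0, (1, 0)))
        ((1/2:ℂ) • (Q.flip (0,(0,Pi.single j 1)) + Complex.I • Q.flip (0,(0,Pi.single j Complex.I)))
          - ((Complex.I * q.2.2 j) • (Q.flip (0,(1,0)))
            + (fderiv ℝ f q (0,(1,0))) • (Complex.I • πj))) q :=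
      (((evalQ (0,(0,Pi.single j 1))).add
          ((evalQ (0,(0,Pi.single j Complex.I))).const_mul Complex.I)).const_mul (1/2:ℂ)).sub hmulfd
    have hzero : ((1/2:ℂ) • (Q.flip (0,(0,Pi.single j 1))
          + Complex.I • Q.flip (0,(0,Pi.single j Complex.I)))
        - ((Complex.I * q.2.2 j) • (Q.flip (0,(1,0)))
          + (fderiv ℝ f q (0,(1,0))) • (Complex.I • πj))) = 0 := by
      have hev : (fun x : ℝ × Heis n =>
          (1/2:ℂ) * (fderiv ℝ f x (0, (0, Pi.single j 1))
            + Complex.I * fderiv ℝ f x (0, (0, Pi.single j Complex.I)))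
          - Complex.I * x.2.2 j * fderiv ℝ f x (0, (1, 0)))
          =ᶠ[𝓝 q] (fun _ => (0:ℂ)) := by
        filter_upwards [hO.mem_nhds hqO] with x hx using (hholo x hx).2 j
      have h1 := hPhifd.fderiv
      rw [hev.fderiv_eq, fderiv_fun_const] at h1
      · exact h1.symm.trans (by simp)
    have h0 : ((1/2:ℂ) • (Q.flip (0,(0,Pi.single j 1))
          + Complex.I • Q.flip (0,(0,Pi.single j Complex.I)))
        - ((Complex.I * q.2.2 j) • (Q.flip (0,(1,0)))
          + (fderiv ℝ f q (0,(1,0))) • (Complex.I • πj))) v = 0 := by rw [hzero]; simp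
    rw [← hA_def] at h0
    simp only [ContinuousLinearMap.sub_apply, ContinuousLinearMap.add_apply,
      ContinuousLinearMap.smul_apply, ContinuousLinearMap.flip_apply, smul_eq_mul,
      ContinuousLinearMap.comp_apply, ContinuousLinearMap.proj_apply,
      ContinuousLinearMap.coe_snd', hπj_def] at h0
    linear_combination h0
  -- decomposition of horizontal directions
  have hVdec : ∀ j : Fin n, (((0:ℝ), (2 * (q.2.2 j).im, Pi.single j 1)) : ℝ × Heis n)
      = (2 * (q.2.2 j).im) • (((0:ℝ), ((1:ℝ), (0 : Fin n → ℂ))) : ℝ × Heis n)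
        + (((0:ℝ), ((0:ℝ), Pi.single j 1)) : ℝ × Heis n) := by
    intro j
    simp [Prod.ext_iff]
  have hWdec : ∀ j : Fin n, (((0:ℝ), (-2 * (q.2.2 j).re, Pi.single j Complex.I)) : ℝ × Heis n)
      = (-2 * (q.2.2 j).re) • (((0:ℝ), ((1:ℝ), (0 : Fin n → ℂ))) : ℝ × Heis n)
        + (((0:ℝ), ((0:ℝ), Pi.single j Complex.I)) : ℝ × Heis n) := by
    intro j
    simp [Prod.ext_iff]
  have hAV : ∀ j : Fin n, A (0, 2 * (q.2.2 j).im, Pi.single j 1)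
      = ((2 * (q.2.2 j).im : ℝ) : ℂ) * A (0,(1,0)) + A (0,(0,Pi.single j 1)) := by
    intro j
    rw [hVdec j, map_add, map_smul, Complex.real_smul]
  have hAW : ∀ j : Fin n, A (0, -2 * (q.2.2 j).re, Pi.single j Complex.I)
      = ((-2 * (q.2.2 j).re : ℝ) : ℂ) * A (0,(1,0)) + A (0,(0,Pi.single j Complex.I)) := by
    intro j
    rw [hWdec j, map_add, map_smul, Complex.real_smul]
  have hQV : ∀ (vv : ℝ × Heis n) (j : Fin n), Q vv (0, 2 * (q.2.2 j).im, Pi.single j 1)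
      = ((2 * (q.2.2 j).im : ℝ) : ℂ) * Q vv (0,(1,0)) + Q vv (0,(0,Pi.single j 1)) := by
    intro vv j
    rw [hVdec j, map_add, map_smul, Complex.real_smul]
  have hQW : ∀ (vv : ℝ × Heis n) (j : Fin n), Q vv (0, -2 * (q.2.2 j).re, Pi.single j Complex.I)
      = ((-2 * (q.2.2 j).re : ℝ) : ℂ) * Q vv (0,(1,0)) + Q vv (0,(0,Pi.single j Complex.I)) := by
    intro vv j
    rw [hWdec j, map_add, map_smul, Complex.real_smul]
  -- first-order consequence: A(W_j) = I * A(V_j)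
  have hG1 : ∀ j : Fin n, A (0, -2 * (q.2.2 j).re, Pi.single j Complex.I)
      = Complex.I * A (0, 2 * (q.2.2 j).im, Pi.single j 1) := by
    intro j
    rw [hAV j, hAW j]
    have h2 := hz0' j
    rw [show q.2.2 j = ((q.2.2 j).re : ℂ) + ((q.2.2 j).im : ℂ) * Complex.I from
      (Complex.re_add_im _).symm] at h2
    push_cast
    linear_combination (-2*Complex.I) * h2
      + (A (0,(0,Pi.single j Complex.I)) - 2*((q.2.2 j).re:ℂ)*A (0,(1,0))
          - 2*Complex.I*((q.2.2 j).im:ℂ)*A (0,(1,0))) * Complex.I_sq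
  -- second-order consequence
  have hG2 : ∀ j : Fin n,
      Q (0, 2 * (q.2.2 j).im, Pi.single j 1) (0, 2 * (q.2.2 j).im, Pi.single j 1)
        + Q (0, -2 * (q.2.2 j).re, Pi.single j Complex.I)
            (0, -2 * (q.2.2 j).re, Pi.single j Complex.I)
        = (4:ℂ) * A (1,0) := by
    intro j
    have e1 := hPhi j ((0, 2 * (q.2.2 j).im, Pi.single j 1) : ℝ × Heis n)
    have e2 := hPhi j ((0, -2 * (q.2.2 j).re, Pi.single j Complex.I) : ℝ × Heis n)
    simp only [Pi.single_eq_same] at e1 e2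
    have hsymm := hsym ((0, 2 * (q.2.2 j).im, Pi.single j 1) : ℝ × Heis n)
      ((0, -2 * (q.2.2 j).re, Pi.single j Complex.I) : ℝ × Heis n)
    rw [hQW _ j, hQV _ j] at hsymm
    rw [hQV _ j, hQW _ j]
    have h1 := hw0
    have hz : q.2.2 j = ((q.2.2 j).re : ℂ) + ((q.2.2 j).im : ℂ) * Complex.I :=
      (Complex.re_add_im _).symm
    push_cast
    push_cast at hsymm
    linear_combination 2*e1 + (-2*Complex.I)*e2 + (-Complex.I)*hsymm
      + (2*Complex.I*Q (0, 2 * (q.2.2 j).im, Pi.single j 1) (0,(1,0))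
         - 2*Complex.I^2*Q (0, -2 * (q.2.2 j).re, Pi.single j Complex.I) (0,(1,0)))*hz
      + (4*Complex.I*(1-Complex.I^2))*h1
      + (2*((q.2.2 j).im:ℂ)*Q (0, 2 * (q.2.2 j).im, Pi.single j 1) (0,(1,0))
        + Q (0, -2 * (q.2.2 j).re, Pi.single j Complex.I) (0,(0,Pi.single j Complex.I))
        - 2*((q.2.2 j).re:ℂ)*Q (0, -2 * (q.2.2 j).re, Pi.single j Complex.I) (0,(1,0))
        - 2*Complex.I*((q.2.2 j).im:ℂ)*Q (0, -2 * (q.2.2 j).re, Pi.single j Complex.I) (0,(1,0))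
        + (-4+2*Complex.I^2)*A (1,0)) * Complex.I_sq
  -- per-index formula
  have hkey : ∀ j : Fin n,
      HH (0, 2 * (q.2.2 j).im, Pi.single j 1) (0, 2 * (q.2.2 j).im, Pi.single j 1)
        + HH (0, -2 * (q.2.2 j).re, Pi.single j Complex.I)
            (0, -2 * (q.2.2 j).re, Pi.single j Complex.I)
        = p^2 * Complex.normSq (f q) ^ (p/2-1) *
            ((A (0, 2 * (q.2.2 j).im, Pi.single j 1)).re^2
              + (A (0, 2 * (q.2.2 j).im, Pi.single j 1)).im^2)
          + 4*p*Complex.normSq (f q) ^ (p/2-1) *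
            ((f q).re * (A (1,0)).re + (f q).im * (A (1,0)).im) := by
    intro j
    have hr : Complex.normSq (f q) ^ (p/2-1-1) * Complex.normSq (f q)
        = Complex.normSq (f q) ^ (p/2-1) := by
      rw [← Real.rpow_add_one hNq.ne' (p/2-1-1)]
      norm_num
    have hxy : Complex.normSq (f q) = (f q).re*(f q).re + (f q).im*(f q).im :=
      Complex.normSq_apply _
    have hre := congrArg Complex.re (hG2 j)
    have him := congrArg Complex.im (hG2 j)
    simp only [Complex.add_re, Complex.add_im, Complex.mul_re, Complex.mul_im,
      Complex.re_ofNat, Complex.im_ofNat] at hre him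
    rw [hHHev, hHHev, hG1 j]
    simp only [Tc_apply, Complex.mul_re, Complex.mul_im, Complex.I_re, Complex.I_im]
    linear_combination (p*Complex.normSq (f q)^(p/2-1)*(f q).re)*hre
      + (p*Complex.normSq (f q)^(p/2-1)*(f q).im)*him
      + (p*(p-2)*((A (0, 2 * (q.2.2 j).im, Pi.single j 1)).re^2
          + (A (0, 2 * (q.2.2 j).im, Pi.single j 1)).im^2))*hr
      + (-(p*(p-2)*((A (0, 2 * (q.2.2 j).im, Pi.single j 1)).re^2
          + (A (0, 2 * (q.2.2 j).im, Pi.single j 1)).im^2)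
            *Complex.normSq (f q)^(p/2-1-1)))*hxy
  -- assembling
  unfold heatOpR
  rw [Finset.sum_congr rfl (fun j _ => by rw [hXX j, hYY j, hkey j])]
  rw [(hu q hqU).fderiv]
  have hDu10 : Du q ((1:ℝ), (0:Heis n)) = p * Complex.normSq (f q)^(p/2-1) *
      ((f q).re * (A (1,0)).re + (f q).im * (A (1,0)).im) := by
    simp only [hDu_def, hDN_def, ContinuousLinearMap.smul_apply,
      ContinuousLinearMap.comp_apply, smul_eq_mul, Tc_apply, ← hA_def]
    ring
  rw [hDu10]
  rw [Finset.sum_add_distrib, Finset.sum_const, Finset.card_univ, Fintype.card_fin,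
    nsmul_eq_mul]
  have hne : ((n:ℝ)) ≠ 0 := Nat.cast_ne_zero.2 hn.ne'
  have hSnn : 0 ≤ ∑ j : Fin n, p^2 * Complex.normSq (f q) ^ (p/2-1) *
      ((A (0, 2 * (q.2.2 j).im, Pi.single j 1)).re^2
        + (A (0, 2 * (q.2.2 j).im, Pi.single j 1)).im^2) := by
    refine Finset.sum_nonneg fun j _ => ?_
    have : (0:ℝ) ≤ Complex.normSq (f q) ^ (p/2-1) :=
      Real.rpow_nonneg (Complex.normSq_nonneg _) _
    positivity
  have hfin : 1/(4*(n:ℝ)) * ((∑ j : Fin n, p^2 * Complex.normSq (f q) ^ (p/2-1) *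
        ((A (0, 2 * (q.2.2 j).im, Pi.single j 1)).re^2
          + (A (0, 2 * (q.2.2 j).im, Pi.single j 1)).im^2))
        + (n:ℝ) * (4*p*Complex.normSq (f q) ^ (p/2-1) *
            ((f q).re * (A (1,0)).re + (f q).im * (A (1,0)).im)))
      - p * Complex.normSq (f q)^(p/2-1) *
          ((f q).re * (A (1,0)).re + (f q).im * (A (1,0)).im)
      = 1/(4*(n:ℝ)) * (∑ j : Fin n, p^2 * Complex.normSq (f q) ^ (p/2-1) *
        ((A (0, 2 * (q.2.2 j).im, Pi.single j 1)).re^2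
          + (A (0, 2 * (q.2.2 j).im, Pi.single j 1)).im^2)) := by
    field_simp
    ring
  rw [hfin]
  have h4n : (0:ℝ) ≤ 1/(4*(n:ℝ)) := by positivity
  exact mul_nonneg h4n hSnn

end
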